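/- arXiv:2206.12846 — 2 statements merged into one kernel-verified Lean document; each statement's English description precedes it below -/
import Mathlib

section
/- If Assumption (A1) holds and moreover the range W(Ω) is a closed subset of ℝ^{d×N}, then for every Q ∈ 𝒜 there exists a probability measure P on (Ω, σ(W)) such that Q = P∘W^{−1}; i.e. Assumption (A3) holds. -/
open MeasureTheory Filter

noncomputable section

/-- `ℝ^d` with the Euclidean norm. -/
abbrev Vec (d : ℕ) : Type := EuclideanSpace ℝ (Fin d)

/-- The backward recursion defining the sublinear expectation:
`ψ 0 = φ` (i.e. `φ_N`) and `ψ (j+1) (x) = sup_θ ∫ ψ j (x with the (N−j)-th variable replaced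
by y) F_θ(dy)` (i.e. `φ_{N-j-1}`); the sublinear expectation is `Ê[φ(W)] = ψ N` (a constant
function, evaluated anywhere). -/
def backSeq {d N : ℕ} {Θ : Type} (hN : 0 < N) (F : Θ → Measure (Vec d))
    (φ : (Fin N → Vec d) → ℝ) : ℕ → ((Fin N → Vec d) → ℝ)
  | 0 => φ
  | j + 1 => fun w =>
      ⨆ θ : Θ, ∫ y, backSeq hN F φ j
        (Function.update w ⟨(N - 1 - j) % N, Nat.mod_lt _ hN⟩ y) ∂(F θ)

/-- The sublinear expectation `Ê[φ(W)] = φ_0` obtained from the backward recursion. -/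
def EHatLip {d N : ℕ} {Θ : Type} (hN : 0 < N) (F : Θ → Measure (Vec d))
    (φ : (Fin N → Vec d) → ℝ) : ℝ :=
  backSeq hN F φ N (fun _ => 0)

lemma backSeq_zero_aux {d N : ℕ} {Θ : Type} [hΘ : Nonempty Θ] (hN : 0 < N)
    (F : Θ → Measure (Vec d)) (hFprob : ∀ θ, IsProbabilityMeasure (F θ))
    (Abar : Fin N → Set (Vec d)) (hAc : ∀ i, IsClosed (Abar i))
    (hF1 : ∀ θ i, F θ (Abar i) = 1)
    (φ : (Fin N → Vec d) → ℝ)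
    (hφ : ∀ w, (∀ i, w i ∈ Abar i) → φ w = 0) :
    ∀ j, j ≤ N → ∀ w : Fin N → Vec d,
      (∀ i : Fin N, (i : ℕ) < N - j → w i ∈ Abar i) → backSeq hN F φ j w = 0 := by
  intro j
  induction j with
  | zero =>
    intro _ w hw
    exact hφ w fun i => hw i (by simpa using i.isLt)
  | succ j ih =>
    intro hj w hw
    have hjN : j < N := Nat.lt_of_succ_le hj
    have hkN : N - 1 - j < N := by omega
    have hmod : (N - 1 - j) % N = N - 1 - j := Nat.mod_eq_of_lt hkN
    set k : Fin N := ⟨(N - 1 - j) % N, Nat.mod_lt _ hN⟩ with hk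
    have hkval : (k : ℕ) = N - (j + 1) := by simp only [hk, hmod]; omega
    have hint : ∀ θ : Θ,
        (∫ y, backSeq hN F φ j (Function.update w k y) ∂(F θ)) = 0 := by
      intro θ
      have := hFprob θ
      have hcompl : F θ (Abar k)ᶜ = 0 := by
        rw [measure_compl (hAc k).measurableSet (measure_ne_top _ _), hF1 θ k,
          measure_univ, tsub_self]
      have hae : ∀ᵐ y ∂(F θ), y ∈ Abar k := by
        rw [MeasureTheory.ae_iff]
        exact hcompl
      refine integral_eq_zero_of_ae ?_
      filter_upwards [hae] with y hy
      refine ih (Nat.le_of_succ_le hj) _ fun i hi => ?_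
      rcases eq_or_ne i k with rfl | hik
      · simpa using hy
      · rw [Function.update_of_ne hik]
        refine hw i ?_
        have : (i : ℕ) ≠ (k : ℕ) := fun h => hik (Fin.ext h)
        omega
    show (⨆ θ : Θ, ∫ y, backSeq hN F φ j (Function.update w k y) ∂(F θ)) = 0
    simp only [hint]
    exact ciSup_const

/-- If Assumption (A1) holds and the range `W(Ω)` is a closed subset of
`ℝ^{d×N}`, then for every `Q ∈ 𝒜` there is a probability measure `P` on `(Ω, σ(W))` with
`Q = P∘W⁻¹`; i.e. Assumption (A3) holds. -/
theorem law_extension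
    {Ω : Type} (N d : ℕ) (hN : 0 < N)
    {Θ : Type} [hΘ : Nonempty Θ]
    -- the family `{F_θ : θ ∈ Θ}` of Borel probability measures on `ℝ^d`
    (F : Θ → Measure (Vec d)) (hFprob : ∀ θ, IsProbabilityMeasure (F θ))
    -- (A2): `sup_θ ∫ |x| F_θ(dx) < ∞`
    (hA2int : ∀ θ, Integrable (fun x => ‖x‖) (F θ))
    (hA2 : BddAbove (Set.range fun θ => ∫ x, ‖x‖ ∂(F θ)))
    -- the noises `W_k : Ω → ℝ^d`, `k = 1, …, N`, and `W = (W_1, …, W_N)`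
    (W : ℕ → Ω → Vec d)
    -- `Ω` carries the σ-algebra `σ(W)`
    (mΩ : MeasurableSpace Ω)
    (hmΩ : mΩ = MeasurableSpace.comap (fun ω (i : Fin N) => W (i + 1) ω) inferInstance)
    -- (A1): `W(Ω) = A_1 × ⋯ × A_N` with `F_θ(Ā_k) = 1`
    (hA1a : Set.range (fun ω (i : Fin N) => W (i + 1) ω)
      = Set.univ.pi fun i : Fin N => Set.range (W (i + 1)))
    (hA1b : ∀ θ, ∀ i : Fin N, F θ (closure (Set.range (W (i + 1)))) = 1)
    -- the range of `W` is closed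
    (hclosed : IsClosed (Set.range (fun ω (i : Fin N) => W (i + 1) ω))) :
    -- conclusion: (A3) holds
    ∀ Q : Measure (Fin N → Vec d), IsProbabilityMeasure Q →
      (∀ (φ : (Fin N → Vec d) → ℝ) (K : NNReal) (M : ℝ), LipschitzWith K φ →
        (∀ x, |φ x| ≤ M) → ∫ x, φ x ∂Q ≤ EHatLip hN F φ) →
      ∃ P : Measure Ω, IsProbabilityMeasure P ∧
        Q = P.map (fun ω (i : Fin N) => W (i + 1) ω) := by
  intro Q hQprob hQA
  subst hmΩ
  letI : MeasurableSpace Ω :=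
    MeasurableSpace.comap (fun ω (i : Fin N) => W (i + 1) ω) inferInstance
  set w : Ω → (Fin N → Vec d) := fun ω (i : Fin N) => W (i + 1) ω with hw
  set S : Set (Fin N → Vec d) := Set.range w with hSdef
  set Abar : Fin N → Set (Vec d) := fun i => closure (Set.range (W (i + 1))) with hAbar
  -- ∏ Ā_i = S
  have hS : Set.univ.pi Abar = S := by
    have h1 : closure S = S := hclosed.closure_eq
    calc Set.univ.pi Abar
        = closure (Set.univ.pi fun i : Fin N => Set.range (W (i + 1))) := by
          rw [closure_pi_set]
      _ = closure S := by rw [← hA1a]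
      _ = S := h1
  -- S is nonempty
  have hAne : ∀ i : Fin N, (Abar i).Nonempty := by
    intro i
    rcases hΘ with ⟨θ⟩
    have hpθ := hFprob θ
    by_contra h
    rw [Set.not_nonempty_iff_eq_empty] at h
    have h1 : F θ (Abar i) = 1 := hA1b θ i
    rw [h] at h1
    simp at h1
  have hSne : S.Nonempty := by
    rw [← hS]
    exact Set.univ_pi_nonempty_iff.2 hAne
  -- the Lipschitz test functions
  set φ : ℕ → (Fin N → Vec d) → ℝ :=
    fun n x => min 1 ((n + 1) * Metric.infDist x S) with hφdef
  have hφnonneg : ∀ n x, 0 ≤ φ n x :=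
    fun n x => le_min zero_le_one (mul_nonneg (by positivity) Metric.infDist_nonneg)
  have hφlip : ∀ n : ℕ, LipschitzWith (n + 1) (φ n) := by
    intro n
    refine LipschitzWith.of_dist_le_mul fun x y => ?_
    have hd : |Metric.infDist x S - Metric.infDist y S| ≤ dist x y := by
      have := (Metric.lipschitz_infDist_pt S).dist_le_mul x y
      rwa [NNReal.coe_one, one_mul, Real.dist_eq] at this
    have hc : (0 : ℝ) ≤ (n : ℝ) + 1 := by positivity
    calc dist (φ n x) (φ n y)
        = |min 1 (((n : ℝ) + 1) * Metric.infDist x S)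
            - min 1 (((n : ℝ) + 1) * Metric.infDist y S)| := by
          simp [hφdef, Real.dist_eq]
      _ ≤ max |(1 : ℝ) - 1| |((n : ℝ) + 1) * Metric.infDist x S
            - ((n : ℝ) + 1) * Metric.infDist y S| := abs_min_sub_min_le_max _ _ _ _
      _ = ((n : ℝ) + 1) * |Metric.infDist x S - Metric.infDist y S| := by
          rw [← mul_sub, abs_mul, abs_of_nonneg hc]
          simp [abs_nonneg, mul_nonneg hc (abs_nonneg _)]
      _ ≤ ((n : ℝ) + 1) * dist x y := by
          exact mul_le_mul_of_nonneg_left hd hc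
      _ = ((n + 1 : NNReal) : ℝ) * dist x y := by push_cast; ring
  have hφbdd : ∀ n x, |φ n x| ≤ 1 := by
    intro n x
    rw [abs_of_nonneg (hφnonneg n x)]
    exact min_le_left _ _
  -- φ n vanishes on S, hence Ê[φ n] = 0
  have hEhat : ∀ n, EHatLip hN F (φ n) = 0 := by
    intro n
    have hvan : ∀ x, (∀ i, x i ∈ Abar i) → φ n x = 0 := by
      intro x hx
      have hxS : x ∈ S := by rw [← hS]; exact fun i _ => hx i
      simp [hφdef, Metric.infDist_zero_of_mem hxS]
    exact backSeq_zero_aux hN F hFprob Abar (fun i => isClosed_closure)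
      (fun θ i => hA1b θ i) (φ n) hvan N le_rfl _ (fun i hi => absurd hi (by omega))
  -- hence ∫ φ n dQ ≤ 0
  have hint0 : ∀ n, ∫ x, φ n x ∂Q ≤ 0 := by
    intro n
    have := hQA (φ n) (n + 1) 1 (hφlip n) (hφbdd n)
    rwa [hEhat n] at this
  -- integrability
  have hφint : ∀ n, Integrable (φ n) Q := by
    intro n
    refine (integrable_const (1 : ℝ)).mono' ((hφlip n).continuous.aestronglyMeasurable) ?_
    exact ae_of_all _ fun x => hφbdd n x
  -- Q(Sᶜ) = 0
  have hQSc : Q Sᶜ = 0 := by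
    have hlevel : ∀ n : ℕ, Q {x | 1 / ((n : ℝ) + 1) ≤ Metric.infDist x S} = 0 := by
      intro n
      have hsub : {x | 1 / ((n : ℝ) + 1) ≤ Metric.infDist x S} ⊆ {x | 1 ≤ φ n x} := by
        intro x hx
        have hn : (0 : ℝ) < (n : ℝ) + 1 := by positivity
        have : (1 : ℝ) ≤ ((n : ℝ) + 1) * Metric.infDist x S := by
          calc (1 : ℝ) = ((n : ℝ) + 1) * (1 / ((n : ℝ) + 1)) := by field_simp
            _ ≤ ((n : ℝ) + 1) * Metric.infDist x S := by
                exact mul_le_mul_of_nonneg_left hx (le_of_lt hn)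
        simp only [Set.mem_setOf_eq, hφdef]
        exact le_min le_rfl this
      have hcheb := mul_meas_ge_le_integral_of_nonneg
        (ae_of_all _ (hφnonneg n)) (hφint n) 1
      rw [one_mul] at hcheb
      have h0 : (Q {x | 1 ≤ φ n x}).toReal = 0 :=
        le_antisymm (hcheb.trans (hint0 n)) ENNReal.toReal_nonneg
      have := (ENNReal.toReal_eq_zero_iff _).1 h0
      rcases this with h | h
      · exact measure_mono_null hsub h
      · exact absurd h (measure_ne_top Q _)
    have hcover : Sᶜ ⊆ ⋃ n : ℕ, {x | 1 / ((n : ℝ) + 1) ≤ Metric.infDist x S} := by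
      intro x hx
      have hpos : 0 < Metric.infDist x S :=
        (hclosed.notMem_iff_infDist_pos hSne).1 hx
      rcases exists_nat_one_div_lt hpos with ⟨n, hn⟩
      exact Set.mem_iUnion.2 ⟨n, le_of_lt hn⟩
    refine measure_mono_null hcover ?_
    exact measure_iUnion_null fun n => hlevel n
  -- Ω is nonempty and a section of w exists
  rcases hSne with ⟨x0, hx0⟩
  rcases hx0 with ⟨ω0, hω0⟩
  have : Nonempty Ω := ⟨ω0⟩
  classical
  set g : (Fin N → Vec d) → Ω :=
    fun x => if h : x ∈ S then h.choose else ω0 with hg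
  have hgsec : ∀ x ∈ S, w (g x) = x := by
    intro x hx
    simp only [hg, dif_pos hx]
    exact hx.choose_spec
  -- w ∘ g is measurable
  have hSmeas : MeasurableSet S := hclosed.measurableSet
  have hwg : (fun x => w (g x)) = S.piecewise id (fun _ => w ω0) := by
    funext x
    by_cases hx : x ∈ S
    · rw [hgsec x hx, Set.piecewise_eq_of_mem _ _ _ hx]; rfl
    · rw [Set.piecewise_eq_of_notMem _ _ _ hx]
      simp only [hg, dif_neg hx]
  have hwgmeas : Measurable (fun x => w (g x)) := by
    rw [hwg]
    exact Measurable.piecewise hSmeas measurable_id measurable_const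
  -- g is measurable
  have hgmeas : Measurable g := by
    intro t ht
    rcases ht with ⟨B, hB, rfl⟩
    have : g ⁻¹' (w ⁻¹' B) = (fun x => w (g x)) ⁻¹' B := rfl
    rw [this]
    exact hwgmeas hB
  have hwmeas : Measurable w := measurable_iff_comap_le.2 le_rfl
  refine ⟨Q.map g, Measure.isProbabilityMeasure_map hgmeas.aemeasurable, ?_⟩
  rw [Measure.map_map hwmeas hgmeas]
  have hae : (fun x => w (g x)) =ᵐ[Q] id := by
    have hmem : S ∈ ae Q := by
      rw [mem_ae_iff]
      exact hQSc
    filter_upwards [hmem] with x hx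
    exact hgsec x hx
  have : Measure.map (w ∘ g) Q = Q := by
    rw [show w ∘ g = fun x => w (g x) from rfl, Measure.map_congr hae, Measure.map_id]
  exact this.symm

end
end

section
/- For the three-point noise problem, the control u* defined by u_0* = 1, u_1* = −(3/5)·sin(πW_1/2)·X_1* − (2/5)·X_1*, u_2* = 0, u_3* = 0 (where X* is the state generated by u*) is an optimal control, and the optimal value is inf_u J(u) = J(u*) = 8/45. -/
open MeasureTheory

noncomputable section

/-- The sample space: `W = (W_1,…,W_4)` with `W_k ∈ ℝ`. -/
abbrev Omega19 : Type := Fin 4 → ℝ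

/-- `F_θ`: the three-point distribution `F_θ({1}) = F_θ({−1}) = θ/2`, `F_θ({0}) = 1 − θ`. -/
def F19 (θ : ℝ) : Measure ℝ :=
  ENNReal.ofReal (θ / 2) • Measure.dirac 1 + ENNReal.ofReal (θ / 2) • Measure.dirac (-1)
    + ENNReal.ofReal (1 - θ) • Measure.dirac 0

/-- One step of the backward recursion defining `Ê`: integrate out the `k`-th noise under
`F_θ` and take the supremum over `θ ∈ [1/3, 2/3]`. -/
def step19 (k : Fin 4) (g : Omega19 → ℝ) (w : Omega19) : ℝ :=
  sSup ((fun θ => ∫ y, g (Function.update w k y) ∂(F19 θ)) '' Set.Icc (1 / 3 : ℝ) (2 / 3))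

/-- The sublinear expectation `Ê[ψ(W)] = ψ_0` from the backward recursion
`ψ_4 = ψ`, `ψ_k = sup_{θ∈[1/3,2/3]} ∫ψ_{k+1} dF_θ`. -/
def EHat19 (g : Omega19 → ℝ) : ℝ :=
  step19 0 (step19 1 (step19 2 (step19 3 g))) (fun _ => 0)

/-- Admissible controls: `u_k` is a Borel function of `(w_1,…,w_k)` of at most quadratic
growth in each variable (`u_0` is a constant). -/
def Adm19 (u : Fin 4 → Omega19 → ℝ) : Prop :=
  ∀ k : Fin 4, Measurable (u k) ∧
    (∀ w w' : Omega19, (∀ i : Fin 4, i < k → w i = w' i) → u k w = u k w') ∧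
    ∃ C : ℝ, ∀ w, |u k w| ≤ C * ∏ i : Fin 4, (if i < k then 1 + |w i| ^ 2 else 1)

/-- `X_1 = 1 + u_0 W_1`. -/
def X1of (u : Fin 4 → Omega19 → ℝ) (w : Omega19) : ℝ := 1 + u 0 w * w 0
/-- `X_2 = sin(πW_1/2)·X_1 + u_1 + (X_1 + u_1)W_2`. -/
def X2of (u : Fin 4 → Omega19 → ℝ) (w : Omega19) : ℝ :=
  Real.sin (Real.pi / 2 * w 0) * X1of u w + u 1 w + (X1of u w + u 1 w) * w 1
/-- `X_3 = X_2 + u_2 W_3`. -/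
def X3of (u : Fin 4 → Omega19 → ℝ) (w : Omega19) : ℝ := X2of u w + u 2 w * w 2
/-- `X_4 = u_3 + X_3 W_4`. -/
def X4of (u : Fin 4 → Omega19 → ℝ) (w : Omega19) : ℝ := u 3 w + X3of u w * w 3

/-- The cost `J(u) = Ê[|X_4|²]`. -/
def J19 (u : Fin 4 → Omega19 → ℝ) : ℝ := EHat19 (fun w => (X4of u w) ^ 2)

/-- The candidate optimal control: `u_0* = 1`,
`u_1* = −(3/5)sin(πW_1/2)X_1* − (2/5)X_1*` (with `X_1* = 1 + W_1`), `u_2* = u_3* = 0`. -/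
def ustar19 : Fin 4 → Omega19 → ℝ := fun k w =>
  if k = 0 then 1
  else if k = 1 then
    -(3 / 5) * Real.sin (Real.pi / 2 * w 0) * (1 + w 0) - (2 / 5) * (1 + w 0)
  else 0

lemma integrableDirac19 {f : ℝ → ℝ} (hf : Measurable f) (a : ℝ) :
    Integrable f (Measure.dirac a) := by
  refine ⟨hf.aestronglyMeasurable, ?_⟩
  simp [HasFiniteIntegral, lintegral_dirac]

lemma intF19 {θ : ℝ} (h0 : 0 ≤ θ) (h1 : θ ≤ 1) {f : ℝ → ℝ} (hf : Measurable f) :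
    ∫ y, f y ∂(F19 θ) = θ / 2 * f 1 + θ / 2 * f (-1) + (1 - θ) * f 0 := by
  unfold F19
  rw [integral_add_measure
      (((integrableDirac19 hf 1).smul_measure ENNReal.ofReal_ne_top).add_measure
        ((integrableDirac19 hf (-1)).smul_measure ENNReal.ofReal_ne_top))
      ((integrableDirac19 hf 0).smul_measure ENNReal.ofReal_ne_top),
    integral_add_measure ((integrableDirac19 hf 1).smul_measure ENNReal.ofReal_ne_top)
      ((integrableDirac19 hf (-1)).smul_measure ENNReal.ofReal_ne_top),
    integral_smul_measure, integral_smul_measure, integral_smul_measure,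
    integral_dirac, integral_dirac, integral_dirac,
    ENNReal.toReal_ofReal (by linarith), ENNReal.toReal_ofReal (by linarith)]
  simp [smul_eq_mul]

lemma sSupAffine19 (a b : ℝ) :
    sSup ((fun θ => b + θ * a) '' Set.Icc (1 / 3 : ℝ) (2 / 3))
      = b + max (a / 3) (2 * a / 3) := by
  apply IsGreatest.csSup_eq
  constructor
  · rcases le_total 0 a with h | h
    · refine ⟨2 / 3, ⟨by norm_num, le_refl _⟩, ?_⟩
      rw [max_eq_right (by linarith)]; ring
    · refine ⟨1 / 3, ⟨le_refl _, by norm_num⟩, ?_⟩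
      rw [max_eq_left (by linarith)]; ring
  · rintro x ⟨θ, ⟨hθ1, hθ2⟩, rfl⟩
    rcases le_total 0 a with h | h
    · have h2 := le_max_right (a / 3) (2 * a / 3)
      have : θ * a ≤ 2 / 3 * a := by nlinarith
      linarith
    · have h2 := le_max_left (a / 3) (2 * a / 3)
      have : θ * a ≤ 1 / 3 * a := by nlinarith
      linarith

lemma stepEval19 (k : Fin 4) (g : Omega19 → ℝ) (w : Omega19)
    (hm : Measurable fun y => g (Function.update w k y)) :
    step19 k g w = g (Function.update w k 0) +
      max (((g (Function.update w k 1) + g (Function.update w k (-1))) / 2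
              - g (Function.update w k 0)) / 3)
          (2 * ((g (Function.update w k 1) + g (Function.update w k (-1))) / 2
              - g (Function.update w k 0)) / 3) := by
  unfold step19
  have him : (fun θ => ∫ y, g (Function.update w k y) ∂(F19 θ)) '' Set.Icc (1 / 3 : ℝ) (2 / 3)
      = (fun θ => g (Function.update w k 0)
          + θ * ((g (Function.update w k 1) + g (Function.update w k (-1))) / 2
              - g (Function.update w k 0))) '' Set.Icc (1 / 3 : ℝ) (2 / 3) := by
    apply Set.image_congr
    intro θ hθ
    rw [intF19 (by linarith [hθ.1]) (by linarith [hθ.2]) hm]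
    ring
  rw [him, sSupAffine19]

lemma stepEval19' (k : Fin 4) (g : Omega19 → ℝ) (w : Omega19)
    (hm : Measurable fun y => g (Function.update w k y)) (p q r : ℝ)
    (hp : g (Function.update w k 1) = p) (hq : g (Function.update w k (-1)) = q)
    (hr : g (Function.update w k 0) = r) :
    step19 k g w = r + max (((p + q) / 2 - r) / 3) (2 * ((p + q) / 2 - r) / 3) := by
  rw [stepEval19 k g w hm, hp, hq, hr]

lemma stepGe19 (k : Fin 4) (g : Omega19 → ℝ) (w : Omega19)
    (hm : Measurable fun y => g (Function.update w k y))
    {θ : ℝ} (h1 : 1 / 3 ≤ θ) (h2 : θ ≤ 2 / 3) :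
    θ / 2 * g (Function.update w k 1) + θ / 2 * g (Function.update w k (-1))
      + (1 - θ) * g (Function.update w k 0) ≤ step19 k g w := by
  rw [stepEval19 k g w hm]
  set A := (g (Function.update w k 1) + g (Function.update w k (-1))) / 2
      - g (Function.update w k 0) with hA
  have hl := le_max_left (A / 3) (2 * A / 3)
  have hr := le_max_right (A / 3) (2 * A / 3)
  rcases le_total 0 A with h | h <;> nlinarith

lemma maxThirds19 {A : ℝ} (h : 0 ≤ A) : max (A / 3) (2 * A / 3) = 2 * A / 3 :=
  max_eq_right (by linarith)

lemma maxThirds19' {A : ℝ} (h : A ≤ 0) : max (A / 3) (2 * A / 3) = A / 3 :=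
  max_eq_left (by linarith)


lemma ustar0 (w : Omega19) : ustar19 0 w = 1 := rfl
lemma ustar1 (w : Omega19) : ustar19 1 w
    = -(3 / 5) * Real.sin (Real.pi / 2 * w 0) * (1 + w 0) - (2 / 5) * (1 + w 0) := rfl
lemma ustar2 (w : Omega19) : ustar19 2 w = 0 := rfl
lemma ustar3 (w : Omega19) : ustar19 3 w = 0 := rfl

lemma admAux0 : Measurable (ustar19 0) ∧
    (∀ w w' : Omega19, (∀ i : Fin 4, i < 0 → w i = w' i) → ustar19 0 w = ustar19 0 w') ∧
    ∃ C : ℝ, ∀ w, |ustar19 0 w| ≤ C * ∏ i : Fin 4, (if i < (0:Fin 4) then 1 + |w i| ^ 2 else 1) := by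
  refine ⟨?_, fun w w' _ => by rw [ustar0, ustar0], 1, fun w => ?_⟩
  · have : ustar19 0 = fun _ => (1:ℝ) := funext ustar0
    rw [this]; exact measurable_const
  · rw [ustar0]; simp

lemma admAux1 : Measurable (ustar19 1) ∧
    (∀ w w' : Omega19, (∀ i : Fin 4, i < 1 → w i = w' i) → ustar19 1 w = ustar19 1 w') ∧
    ∃ C : ℝ, ∀ w, |ustar19 1 w| ≤ C * ∏ i : Fin 4, (if i < (1:Fin 4) then 1 + |w i| ^ 2 else 1) := by
  refine ⟨?_, fun w w' h => by rw [ustar1, ustar1, h 0 (by decide)], 2, fun w => ?_⟩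
  · have : ustar19 1 = fun w =>
        -(3 / 5) * Real.sin (Real.pi / 2 * w 0) * (1 + w 0) - (2 / 5) * (1 + w 0) :=
      funext ustar1
    rw [this]; fun_prop
  · rw [ustar1]
    have hprod : ∏ i : Fin 4, (if i < (1 : Fin 4) then 1 + |w i| ^ 2 else (1:ℝ))
        = 1 + |w 0| ^ 2 := by norm_num [Fin.prod_univ_four]
    rw [hprod]
    set s := Real.sin (Real.pi / 2 * w 0) with hs
    have h1 : -1 ≤ s := Real.neg_one_le_sin _
    have h2 : s ≤ 1 := Real.sin_le_one _
    have key : |(-(3 / 5) * s * (1 + w 0) - 2 / 5 * (1 + w 0))| ≤ |1 + w 0| := by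
      have he : -(3 / 5) * s * (1 + w 0) - 2 / 5 * (1 + w 0)
          = (1 + w 0) * (-(3 / 5 * s + 2 / 5)) := by ring
      rw [he, abs_mul]
      have hb : |(-(3 / 5 * s + 2 / 5))| ≤ 1 := by
        rw [abs_le]; constructor <;> nlinarith
      nlinarith [abs_nonneg (1 + w 0)]
    have h3 : |1 + w 0| ≤ 1 + |w 0| := by
      calc |1 + w 0| ≤ |(1:ℝ)| + |w 0| := abs_add_le 1 (w 0)
        _ = 1 + |w 0| := by norm_num
    nlinarith [sq_nonneg (2 * |w 0| - 1), abs_nonneg (w 0)]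

lemma admAux2 : Measurable (ustar19 2) ∧
    (∀ w w' : Omega19, (∀ i : Fin 4, i < 2 → w i = w' i) → ustar19 2 w = ustar19 2 w') ∧
    ∃ C : ℝ, ∀ w, |ustar19 2 w| ≤ C * ∏ i : Fin 4, (if i < (2:Fin 4) then 1 + |w i| ^ 2 else 1) := by
  refine ⟨?_, fun w w' _ => by rw [ustar2, ustar2], 0, fun w => ?_⟩
  · have : ustar19 2 = fun _ => (0:ℝ) := funext ustar2
    rw [this]; exact measurable_const
  · rw [ustar2]; simp

lemma admAux3 : Measurable (ustar19 3) ∧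
    (∀ w w' : Omega19, (∀ i : Fin 4, i < 3 → w i = w' i) → ustar19 3 w = ustar19 3 w') ∧
    ∃ C : ℝ, ∀ w, |ustar19 3 w| ≤ C * ∏ i : Fin 4, (if i < (3:Fin 4) then 1 + |w i| ^ 2 else 1) := by
  refine ⟨?_, fun w w' _ => by rw [ustar3, ustar3], 0, fun w => ?_⟩
  · have : ustar19 3 = fun _ => (0:ℝ) := funext ustar3
    rw [this]; exact measurable_const
  · rw [ustar3]; simp

lemma admStar : Adm19 ustar19 := by
  intro k
  fin_cases k
  · exact admAux0
  · exact admAux1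
  · exact admAux2
  · exact admAux3

def sStar19 (w : Omega19) : ℝ := Real.sin (Real.pi / 2 * w 0)
def Estar19 (w : Omega19) : ℝ := (1 - sStar19 w) * (1 + w 0) * (3 / 5 * w 1 - 2 / 5)

lemma hX3star (w : Omega19) : X3of ustar19 w = Estar19 w := by
  unfold X3of X2of X1of Estar19 sStar19
  rw [ustar0, ustar1, ustar2]
  ring

lemma EstarUpd (w : Omega19) (k : Fin 4) (y : ℝ) (h0 : (0:Fin 4) ≠ k) (h1 : (1:Fin 4) ≠ k) :
    Estar19 (Function.update w k y) = Estar19 w := by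
  unfold Estar19 sStar19
  rw [Function.update_of_ne h0, Function.update_of_ne h1]

lemma hstep3star : step19 3 (fun w => X4of ustar19 w ^ 2) = fun w => 2 / 3 * Estar19 w ^ 2 := by
  funext w
  have key : ∀ y : ℝ, X4of ustar19 (Function.update w 3 y) ^ 2 = (Estar19 w * y) ^ 2 := by
    intro y
    unfold X4of
    rw [ustar3, hX3star, EstarUpd w 3 y (by decide) (by decide), Function.update_self]
    ring
  have hm : Measurable fun y => X4of ustar19 (Function.update w 3 y) ^ 2 := by
    rw [show (fun y => X4of ustar19 (Function.update w 3 y) ^ 2)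
        = fun y => (Estar19 w * y) ^ 2 from funext key]
    fun_prop
  rw [stepEval19' 3 _ w hm (Estar19 w ^ 2) (Estar19 w ^ 2) 0
    (by simp only [key]; ring) (by simp only [key]; ring) (by simp only [key]; ring)]
  rw [show (Estar19 w ^ 2 + Estar19 w ^ 2) / 2 - 0 = Estar19 w ^ 2 by ring,
    maxThirds19 (sq_nonneg _)]
  ring

lemma hstep2star : step19 2 (fun w => 2 / 3 * Estar19 w ^ 2)
    = fun w => 2 / 3 * Estar19 w ^ 2 := by
  funext w
  have key : ∀ y : ℝ, (2 / 3 : ℝ) * Estar19 (Function.update w 2 y) ^ 2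
      = 2 / 3 * Estar19 w ^ 2 := by
    intro y; rw [EstarUpd w 2 y (by decide) (by decide)]
  have hm : Measurable fun y => (2 / 3 : ℝ) * Estar19 (Function.update w 2 y) ^ 2 := by
    rw [show (fun y => (2 / 3 : ℝ) * Estar19 (Function.update w 2 y) ^ 2)
        = fun _ => 2 / 3 * Estar19 w ^ 2 from funext key]
    exact measurable_const
  rw [stepEval19' 2 _ w hm (2 / 3 * Estar19 w ^ 2) (2 / 3 * Estar19 w ^ 2)
    (2 / 3 * Estar19 w ^ 2) (key 1) (key (-1)) (key 0)]
  rw [show (2 / 3 * Estar19 w ^ 2 + 2 / 3 * Estar19 w ^ 2) / 2 - 2 / 3 * Estar19 w ^ 2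
      = 0 by ring]
  norm_num

lemma hstep1star : step19 1 (fun w => 2 / 3 * Estar19 w ^ 2)
    = fun w => 4 / 15 * ((1 - sStar19 w) * (1 + w 0)) ^ 2 := by
  funext w
  have key : ∀ y : ℝ, (2 / 3 : ℝ) * Estar19 (Function.update w 1 y) ^ 2
      = 2 / 3 * ((1 - sStar19 w) * (1 + w 0) * (3 / 5 * y - 2 / 5)) ^ 2 := by
    intro y
    unfold Estar19 sStar19
    rw [Function.update_of_ne (by decide : (0:Fin 4) ≠ 1), Function.update_self]
  have hm : Measurable fun y => (2 / 3 : ℝ) * Estar19 (Function.update w 1 y) ^ 2 := by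
    rw [show (fun y => (2 / 3 : ℝ) * Estar19 (Function.update w 1 y) ^ 2)
        = fun y => 2 / 3 * ((1 - sStar19 w) * (1 + w 0) * (3 / 5 * y - 2 / 5)) ^ 2
        from funext key]
    fun_prop
  set c := (1 - sStar19 w) * (1 + w 0) with hc
  rw [stepEval19' 1 _ w hm (2 / 75 * c ^ 2) (2 / 3 * c ^ 2) (8 / 75 * c ^ 2)
    (by simp only [key]; ring) (by simp only [key]; ring) (by simp only [key]; ring)]
  rw [show (2 / 75 * c ^ 2 + 2 / 3 * c ^ 2) / 2 - 8 / 75 * c ^ 2 = 6 / 25 * c ^ 2 by ring,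
    maxThirds19 (by positivity)]
  ring

lemma hstep0star : step19 0 (fun w => 4 / 15 * ((1 - sStar19 w) * (1 + w 0)) ^ 2)
    (fun _ => 0) = 8 / 45 := by
  have mg : Measurable (fun w : Omega19 => 4 / 15 * ((1 - sStar19 w) * (1 + w 0)) ^ 2) := by
    unfold sStar19; fun_prop
  have hm : Measurable fun y =>
      (fun w : Omega19 => 4 / 15 * ((1 - sStar19 w) * (1 + w 0)) ^ 2)
        (Function.update (fun _ => (0:ℝ)) 0 y) :=
    mg.comp (measurable_update _)
  rw [stepEval19' 0 _ (fun _ => 0) hm 0 0 (4 / 15)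
    (by norm_num [sStar19, Function.update_self, Real.sin_pi_div_two])
    (by norm_num [sStar19, Function.update_self])
    (by norm_num [sStar19, Function.update_self, Real.sin_zero])]
  rw [show ((0:ℝ) + 0) / 2 - 4 / 15 = -(4 / 15) by norm_num, maxThirds19' (by norm_num)]
  norm_num

lemma Jstar : J19 ustar19 = 8 / 45 := by
  unfold J19 EHat19
  rw [hstep3star, hstep2star, hstep1star]
  exact hstep0star

lemma lower19 (u : Fin 4 → Omega19 → ℝ) (hu : Adm19 u) : 8 / 45 ≤ J19 u := by
  -- adaptedness under update
  have hud : ∀ (j k : Fin 4), j ≤ k → ∀ (w : Omega19) (y : ℝ),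
      u j (Function.update w k y) = u j w := by
    intro j k hjk w y
    refine (hu j).2.1 _ _ ?_
    intro i hij
    refine Function.update_of_ne ?_ y w
    intro h
    exact absurd (lt_of_lt_of_le (h ▸ hij) hjk) (lt_irrefl k)
  -- measurability of states
  have m0 := (hu 0).1
  have m1 := (hu 1).1
  have m2 := (hu 2).1
  have m3 := (hu 3).1
  have mX1 : Measurable (X1of u) := by
    unfold X1of; exact measurable_const.add (m0.mul (measurable_pi_apply 0))
  have mX2 : Measurable (X2of u) := by
    unfold X2of
    exact (((Real.measurable_sin.comp (measurable_const.mul (measurable_pi_apply 0))).mul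
      mX1).add m1).add ((mX1.add m1).mul (measurable_pi_apply 1))
  have mX3 : Measurable (X3of u) := by
    unfold X3of; exact mX2.add (m2.mul (measurable_pi_apply 2))
  -- state update invariance
  have hX1upd1 : ∀ (w : Omega19) (y : ℝ), X1of u (Function.update w 1 y) = X1of u w := by
    intro w y; unfold X1of
    rw [hud 0 1 (by decide), Function.update_of_ne (by decide : (0:Fin 4) ≠ 1)]
  have hX2upd2 : ∀ (w : Omega19) (y : ℝ), X2of u (Function.update w 2 y) = X2of u w := by
    intro w y; unfold X2of X1of
    rw [hud 0 2 (by decide), hud 1 2 (by decide),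
      Function.update_of_ne (by decide : (0:Fin 4) ≠ 2),
      Function.update_of_ne (by decide : (1:Fin 4) ≠ 2)]
  have hX3upd3 : ∀ (w : Omega19) (y : ℝ), X3of u (Function.update w 3 y) = X3of u w := by
    intro w y; unfold X3of X2of X1of
    rw [hud 0 3 (by decide), hud 1 3 (by decide), hud 2 3 (by decide),
      Function.update_of_ne (by decide : (0:Fin 4) ≠ 3),
      Function.update_of_ne (by decide : (1:Fin 4) ≠ 3),
      Function.update_of_ne (by decide : (2:Fin 4) ≠ 3)]
  -- step 3 exact計算
  set G3 : Omega19 → ℝ := fun w => (u 3 w) ^ 2 + 2 / 3 * (X3of u w) ^ 2 with hG3def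
  have h3u : ∀ w, step19 3 (fun w => X4of u w ^ 2) w = G3 w := by
    intro w
    have key : ∀ y : ℝ, X4of u (Function.update w 3 y) ^ 2
        = (u 3 w + X3of u w * y) ^ 2 := by
      intro y; unfold X4of
      rw [hud 3 3 le_rfl, hX3upd3, Function.update_self]
    have hm : Measurable fun y => X4of u (Function.update w 3 y) ^ 2 := by
      rw [show (fun y => X4of u (Function.update w 3 y) ^ 2)
          = fun y => (u 3 w + X3of u w * y) ^ 2 from funext key]
      fun_prop
    rw [stepEval19' 3 _ w hm ((u 3 w + X3of u w) ^ 2) ((u 3 w - X3of u w) ^ 2) ((u 3 w) ^ 2)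
      (by simp only [key]; ring) (by simp only [key]; ring) (by simp only [key]; ring)]
    rw [show ((u 3 w + X3of u w) ^ 2 + (u 3 w - X3of u w) ^ 2) / 2 - (u 3 w) ^ 2
        = (X3of u w) ^ 2 by ring, maxThirds19 (sq_nonneg _)]
    simp only [hG3def]
    ring
  have hg3f : step19 3 (fun w => X4of u w ^ 2) = G3 := funext h3u
  have mG3 : Measurable G3 := (m3.pow_const 2).add (measurable_const.mul (mX3.pow_const 2))
  -- step 2: closed form F, and lower bound
  set F : Omega19 → ℝ := fun w => G3 (Function.update w 2 0) +
      max (((G3 (Function.update w 2 1) + G3 (Function.update w 2 (-1))) / 2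
              - G3 (Function.update w 2 0)) / 3)
          (2 * ((G3 (Function.update w 2 1) + G3 (Function.update w 2 (-1))) / 2
              - G3 (Function.update w 2 0)) / 3) with hFdef
  have hFeq : step19 2 G3 = F :=
    funext fun w => stepEval19 2 G3 w (mG3.comp (measurable_update w))
  have mU2 : ∀ c : ℝ, Measurable fun w : Omega19 => G3 (Function.update w 2 c) :=
    fun c => mG3.comp measurable_update_left
  have mF : Measurable F := by
    rw [hFdef]
    exact (mU2 0).add
      (((((((mU2 1).add (mU2 (-1))).div_const 2).sub (mU2 0)).div_const 3)).max
        (((((((mU2 1).add (mU2 (-1))).div_const 2).sub (mU2 0))).const_mul 2).div_const 3))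
  have h2low : ∀ w, 2 / 3 * (X2of u w) ^ 2 ≤ F w := by
    intro w
    have hkey : ∀ y : ℝ, G3 (Function.update w 2 y)
        = (u 3 (Function.update w 2 y)) ^ 2 + 2 / 3 * (X2of u w + u 2 w * y) ^ 2 := by
      intro y
      have hx : X3of u (Function.update w 2 y) = X2of u w + u 2 w * y := by
        unfold X3of; rw [hX2upd2, hud 2 2 le_rfl, Function.update_self]
      simp only [hG3def]
      rw [hx]
    have hg := stepGe19 2 G3 w (mG3.comp (measurable_update w)) (θ := 1/3) le_rfl (by norm_num)
    rw [hFeq] at hg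
    rw [hkey 1, hkey (-1), hkey 0] at hg
    nlinarith [sq_nonneg (u 3 (Function.update w 2 1)), sq_nonneg (u 3 (Function.update w 2 (-1))),
      sq_nonneg (u 3 (Function.update w 2 0)), sq_nonneg (u 2 w), hg]
  -- step 1 lower bound
  have h1low : ∀ w, 4 / 15 * ((1 - Real.sin (Real.pi / 2 * w 0)) * X1of u w) ^ 2
      ≤ step19 1 F w := by
    intro w
    have hm1 : Measurable fun y => F (Function.update w 1 y) := mF.comp (measurable_update w)
    have hX2k : ∀ y : ℝ, X2of u (Function.update w 1 y)
        = Real.sin (Real.pi / 2 * w 0) * X1of u w + u 1 w + (X1of u w + u 1 w) * y := by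
      intro y; unfold X2of
      rw [hX1upd1, hud 1 1 le_rfl, Function.update_of_ne (by decide : (0:Fin 4) ≠ 1),
        Function.update_self]
    have hg := stepGe19 1 F w hm1 (θ := 2/3) (by norm_num) le_rfl
    have b1 := h2low (Function.update w 1 1)
    have b2 := h2low (Function.update w 1 (-1))
    have b3 := h2low (Function.update w 1 0)
    rw [hX2k 1] at b1
    rw [hX2k (-1)] at b2
    rw [hX2k 0] at b3
    set s := Real.sin (Real.pi / 2 * w 0) with hs
    set x := X1of u w with hx
    set t := u 1 w with ht
    nlinarith [sq_nonneg (t + (3 * s + 2) / 5 * x), hg, b1, b2, b3]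
  -- step 1 closed form F1
  set F1 : Omega19 → ℝ := fun w => F (Function.update w 1 0) +
      max (((F (Function.update w 1 1) + F (Function.update w 1 (-1))) / 2
              - F (Function.update w 1 0)) / 3)
          (2 * ((F (Function.update w 1 1) + F (Function.update w 1 (-1))) / 2
              - F (Function.update w 1 0)) / 3) with hF1def
  have hF1eq : step19 1 F = F1 :=
    funext fun w => stepEval19 1 F w (mF.comp (measurable_update w))
  have mU1 : ∀ c : ℝ, Measurable fun w : Omega19 => F (Function.update w 1 c) :=
    fun c => mF.comp measurable_update_left
  have mF1 : Measurable F1 := by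
    rw [hF1def]
    exact (mU1 0).add
      (((((((mU1 1).add (mU1 (-1))).div_const 2).sub (mU1 0)).div_const 3)).max
        (((((((mU1 1).add (mU1 (-1))).div_const 2).sub (mU1 0))).const_mul 2).div_const 3))
  -- step 0
  have hJ : J19 u = step19 0 F1 (fun _ => 0) := by
    unfold J19 EHat19
    rw [hg3f, hFeq, hF1eq]
  have hm0 : Measurable fun y => F1 (Function.update (fun _ => (0:ℝ)) 0 y) :=
    mF1.comp (measurable_update _)
  have hg := stepGe19 0 F1 (fun _ => 0) hm0 (θ := 1/3) le_rfl (by norm_num)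
  have l1 := h1low (Function.update (fun _ => (0:ℝ)) 0 1)
  have l2 := h1low (Function.update (fun _ => (0:ℝ)) 0 (-1))
  have l0 := h1low (Function.update (fun _ => (0:ℝ)) 0 0)
  rw [hF1eq] at l1 l2 l0
  have n1 : (0:ℝ) ≤ F1 (Function.update (fun _ => (0:ℝ)) 0 1) :=
    le_trans (by positivity) l1
  have n2 : (0:ℝ) ≤ F1 (Function.update (fun _ => (0:ℝ)) 0 (-1)) :=
    le_trans (by positivity) l2
  have e0 : X1of u (Function.update (fun _ => (0:ℝ)) 0 0) = 1 := by
    unfold X1of; rw [Function.update_self]; ring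
  rw [e0] at l0
  rw [Function.update_self] at l0
  norm_num [Real.sin_zero] at l0
  simp only [Function.update_eq_self] at hg
  rw [hJ]
  clear_value G3 F F1
  linarith [hg, n1, n2, l0]

/-- For the three-point noise problem, the control `u*` is admissible and
optimal, and the optimal value is `J(u*) = 8/45`. -/
theorem three_point_noise_example :
    Adm19 ustar19 ∧ (∀ u, Adm19 u → J19 ustar19 ≤ J19 u) ∧ J19 ustar19 = 8 / 45 := by
  refine ⟨admStar, fun u hu => ?_, Jstar⟩
  rw [Jstar]
  exact lower19 u hu

end
end
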